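/- With the distribution P(I) ∝ e_Iᵀ L⁻¹ e_I over subsets I ⊆ [n] of size τ, for all x, y ∈ ℝ^n with Σ_i y_i = 0, it holds that 𝔼_I[⟨G_I x, y⟩_L] = ((τ−1)/(n−1)) ⟨x, y⟩, where ⟨u,v⟩_L = uᵀ L v. -/

import Mathlib

open Matrix BigOperators Finset

lemma card_filter_subset_powersetCard {α : Type*} [DecidableEq α]
    (s t : Finset α) (ht : t ⊆ s) (k : ℕ) (htk : t.card ≤ k) :
    ((Finset.powersetCard k s).filter (fun I => t ⊆ I)).card
      = (s.card - t.card).choose (k - t.card) := by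
  have h1 : ((Finset.powersetCard k s).filter (fun I => t ⊆ I)).card
      = (Finset.powersetCard (k - t.card) (s \ t)).card := by
    apply Finset.card_nbij' (i := fun I => I \ t) (j := fun J => J ∪ t)
    · intro I hI
      simp only [Finset.mem_coe, Finset.mem_filter, Finset.mem_powersetCard] at hI ⊢
      obtain ⟨⟨hIs, hIk⟩, htI⟩ := hI
      exact ⟨Finset.sdiff_subset_sdiff hIs le_rfl, by rw [Finset.card_sdiff_of_subset htI, hIk]⟩
    · intro J hJ
      simp only [Finset.mem_coe, Finset.mem_filter, Finset.mem_powersetCard] at hJ ⊢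
      obtain ⟨hJs, hJk⟩ := hJ
      have hdisj : Disjoint J t := Finset.disjoint_of_subset_left hJs Finset.sdiff_disjoint
      refine ⟨⟨Finset.union_subset (hJs.trans (Finset.sdiff_subset)) ht, ?_⟩,
        Finset.subset_union_right⟩
      rw [Finset.card_union_of_disjoint hdisj, hJk]
      omega
    · intro I hI
      simp only [Finset.mem_coe, Finset.mem_filter, Finset.mem_powersetCard] at hI
      exact Finset.sdiff_union_of_subset hI.2
    · intro J hJ
      simp only [Finset.mem_coe, Finset.mem_powersetCard] at hJ
      have hdisj : Disjoint J t := Finset.disjoint_of_subset_left hJ.1 Finset.sdiff_disjoint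
      dsimp only
      rw [Finset.union_sdiff_right, Finset.sdiff_eq_self_of_disjoint hdisj]
  rw [h1, Finset.card_powersetCard, Finset.card_sdiff_of_subset ht]

lemma count_pair {n τ : ℕ} (hτ : 2 ≤ τ) (i j : Fin n) :
    ((Finset.powersetCard τ (Finset.univ : Finset (Fin n))).filter
      (fun I => i ∈ I ∧ j ∈ I)).card
      = if i = j then (n-1).choose (τ-1) else (n-2).choose (τ-2) := by
  split_ifs with h
  · subst h
    have key := card_filter_subset_powersetCard (Finset.univ : Finset (Fin n)) {i}
      (Finset.subset_univ _) τ (by simp; omega)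
    rw [Finset.filter_congr (fun I _ => by simp [Finset.singleton_subset_iff] : ∀ I ∈ _,
      (i ∈ I ∧ i ∈ I) ↔ ({i} : Finset (Fin n)) ⊆ I)]
    rw [key]
    simp
  · have hcard : ({i, j} : Finset (Fin n)).card = 2 := Finset.card_pair h
    have key := card_filter_subset_powersetCard (Finset.univ : Finset (Fin n)) {i, j}
      (Finset.subset_univ _) τ (by rw [hcard]; exact hτ)
    rw [Finset.filter_congr (fun I _ => by simp [Finset.insert_subset_iff] : ∀ I ∈ _,
      (i ∈ I ∧ j ∈ I) ↔ ({i, j} : Finset (Fin n)) ⊆ I)]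
    rw [key, hcard]
    simp

lemma sum_ite_mem_univ {n : ℕ} (I : Finset (Fin n)) (f : Fin n → ℝ) :
    ∑ i, (if i ∈ I then f i else 0) = ∑ i ∈ I, f i := by
  rw [← Finset.sum_filter]
  congr 1
  simp [Finset.filter_mem_eq_inter]

lemma pair_sum {n τ : ℕ} (hτ : 2 ≤ τ) (f g : Fin n → ℝ) :
    ∑ I ∈ Finset.powersetCard τ (Finset.univ : Finset (Fin n)),
        (∑ i ∈ I, f i) * (∑ j ∈ I, g j)
      = ((n-2).choose (τ-2) : ℝ) * ((∑ i, f i) * (∑ j, g j))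
        + (((n-1).choose (τ-1) : ℝ) - ((n-2).choose (τ-2) : ℝ)) * ∑ i, f i * g i := by
  set P := Finset.powersetCard τ (Finset.univ : Finset (Fin n))
  have step1 : ∀ I ∈ P, (∑ i ∈ I, f i) * (∑ j ∈ I, g j)
      = ∑ i : Fin n, ∑ j : Fin n,
          (if i ∈ I then f i else 0) * (if j ∈ I then g j else 0) := by
    intro I _
    rw [← sum_ite_mem_univ I f, ← sum_ite_mem_univ I g, Finset.sum_mul_sum]
  rw [Finset.sum_congr rfl step1, Finset.sum_comm]
  have step2 : ∀ i : Fin n, ∑ I ∈ P, ∑ j : Fin n,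
        (if i ∈ I then f i else 0) * (if j ∈ I then g j else 0)
      = ∑ j : Fin n, ∑ I ∈ P,
        (if i ∈ I then f i else 0) * (if j ∈ I then g j else 0) := fun i => Finset.sum_comm
  rw [Finset.sum_congr rfl (fun i _ => step2 i)]
  have step3 : ∀ i j : Fin n, ∑ I ∈ P,
        (if i ∈ I then f i else 0) * (if j ∈ I then g j else 0)
      = (if i = j then ((n-1).choose (τ-1) : ℝ) else ((n-2).choose (τ-2) : ℝ)) * (f i * g j) := by
    intro i j
    have : ∀ I ∈ P, (if i ∈ I then f i else 0) * (if j ∈ I then g j else 0)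
        = if i ∈ I ∧ j ∈ I then f i * g j else 0 := fun I _ => ite_zero_mul_ite_zero _ _ _ _
    rw [Finset.sum_congr rfl this, Finset.sum_ite, Finset.sum_const, Finset.sum_const_zero,
      add_zero, nsmul_eq_mul, count_pair hτ i j]
    split_ifs <;> ring
  rw [Finset.sum_congr rfl (fun i _ => Finset.sum_congr rfl (fun j _ => step3 i j))]
  have step4 : ∀ i j : Fin n,
      (if i = j then ((n-1).choose (τ-1) : ℝ) else ((n-2).choose (τ-2) : ℝ)) * (f i * g j)
      = ((n-2).choose (τ-2) : ℝ) * (f i * g j)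
        + (if i = j then (((n-1).choose (τ-1) : ℝ) - ((n-2).choose (τ-2) : ℝ)) * (f i * g i) else 0) := by
    intro i j
    split_ifs with h
    · subst h; ring
    · ring
  rw [Finset.sum_congr rfl (fun i _ => Finset.sum_congr rfl (fun j _ => step4 i j))]
  simp only [Finset.sum_add_distrib, Finset.sum_ite_eq, Finset.mem_univ, if_true]
  congr 1
  · rw [Finset.sum_mul_sum]
    simp_rw [Finset.mul_sum]
  · rw [Finset.mul_sum]

lemma single_sum {n τ : ℕ} (hτ : 2 ≤ τ) (f : Fin n → ℝ) :
    ∑ I ∈ Finset.powersetCard τ (Finset.univ : Finset (Fin n)), ∑ i ∈ I, f i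
      = ((n-1).choose (τ-1) : ℝ) * ∑ i, f i := by
  set P := Finset.powersetCard τ (Finset.univ : Finset (Fin n))
  have step1 : ∀ I ∈ P, ∑ i ∈ I, f i = ∑ i : Fin n, (if i ∈ I then f i else 0) :=
    fun I _ => (sum_ite_mem_univ I f).symm
  rw [Finset.sum_congr rfl step1, Finset.sum_comm]
  have step2 : ∀ i : Fin n, ∑ I ∈ P, (if i ∈ I then f i else 0)
      = ((n-1).choose (τ-1) : ℝ) * f i := by
    intro i
    rw [Finset.sum_ite, Finset.sum_const, Finset.sum_const_zero, add_zero, nsmul_eq_mul]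
    congr 2
    have := count_pair hτ i i
    simpa using this
  rw [Finset.sum_congr rfl (fun i _ => step2 i), ← Finset.mul_sum]

/-- Under the sampling distribution `P(I) ∝ e_Iᵀ L⁻¹ e_I` over subsets of size τ,
for all x and all y with ∑ y i = 0, `𝔼_I[⟨G_I x, y⟩_L] = ((τ−1)/(n−1)) ⟨x, y⟩`. -/
theorem stmt6 {n : ℕ} (τ : ℕ) (hτ : 2 ≤ τ) (hτn : τ ≤ n)
    (L : Fin n → ℝ) (hL : ∀ i, 0 < L i)
    (x y : Fin n → ℝ) (hy : ∑ i, y i = 0) :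
    let eI : Finset (Fin n) → (Fin n → ℝ) := fun I i => if i ∈ I then 1 else 0
    let c : Finset (Fin n) → ℝ := fun I => ∑ i ∈ I, (L i)⁻¹
    let v : Finset (Fin n) → (Fin n → ℝ) := fun I i => (L i)⁻¹ * eI I i
    let G : Finset (Fin n) → Matrix (Fin n) (Fin n) ℝ := fun I =>
      Matrix.diagonal (fun i => eI I i * (L i)⁻¹) -
        (c I)⁻¹ • Matrix.vecMulVec (v I) (v I)
    let Psets := Finset.powersetCard τ (Finset.univ : Finset (Fin n))
    let p : Finset (Fin n) → ℝ := fun I => c I / ∑ J ∈ Psets, c J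
    ∑ I ∈ Psets, p I * ((G I *ᵥ x) ⬝ᵥ (Matrix.diagonal L *ᵥ y))
      = (((τ : ℝ) - 1) / ((n : ℝ) - 1)) * (x ⬝ᵥ y) := by
  intro eI c v G Psets p
  have hn2 : 2 ≤ n := hτ.trans hτn
  have hLne : ∀ i, L i ≠ 0 := fun i => (hL i).ne'
  set A : ℝ := ((n-2).choose (τ-2) : ℝ) with hA
  set B : ℝ := ((n-1).choose (τ-1) : ℝ) with hB
  set T : ℝ := ∑ j, (L j)⁻¹ with hT
  have hn0 : 0 < n := by omega
  have hTpos : 0 < T := Finset.sum_pos (fun i _ => inv_pos.2 (hL i))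
    (Finset.univ_nonempty_iff.2 ⟨⟨0, hn0⟩⟩)
  have hBpos : 0 < B := by
    have h : 0 < (n-1).choose (τ-1) := Nat.choose_pos (by omega)
    rw [hB]
    exact_mod_cast h
  -- value of S
  have hS : ∑ J ∈ Psets, c J = B * T := by
    simpa using single_sum hτ (fun i => (L i)⁻¹)
  have hSne : B * T ≠ 0 := by positivity
  -- nonvanishing of c I on Psets
  have hcpos : ∀ I ∈ Psets, 0 < c I := by
    intro I hI
    rw [Finset.mem_powersetCard] at hI
    have : I.Nonempty := Finset.card_pos.1 (by omega)
    exact Finset.sum_pos (fun i _ => inv_pos.2 (hL i)) this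
  -- value of the quadratic form per I
  have hval : ∀ I ∈ Psets, (G I *ᵥ x) ⬝ᵥ (Matrix.diagonal L *ᵥ y)
      = (∑ i ∈ I, x i * y i)
        - (c I)⁻¹ * ((∑ i ∈ I, (L i)⁻¹ * x i) * (∑ i ∈ I, y i)) := by
    intro I hI
    simp only [G, Matrix.sub_mulVec, sub_dotProduct]
    congr 1
    · simp only [dotProduct, Matrix.mulVec_diagonal, eI]
      rw [← sum_ite_mem_univ I (fun i => x i * y i)]
      apply Finset.sum_congr rfl
      intro i _
      split_ifs with h
      · have hc : (L i)⁻¹ * L i = 1 := inv_mul_cancel₀ (hLne i)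
        calc (1 * (L i)⁻¹ * x i) * (L i * y i) = ((L i)⁻¹ * L i) * (x i * y i) := by ring
          _ = x i * y i := by rw [hc]; ring
      · ring
    · rw [Matrix.smul_mulVec, smul_dotProduct, smul_eq_mul]
      congr 1
      set D := ∑ j, v I j * x j with hD
      have hmv : Matrix.vecMulVec (v I) (v I) *ᵥ x
          = fun i => v I i * D := by
        funext i
        simp [D, Matrix.mulVec, Matrix.vecMulVec_apply, dotProduct, Finset.mul_sum,
          mul_assoc]
      rw [hmv]
      have h1 : D = ∑ i ∈ I, (L i)⁻¹ * x i := by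
        rw [hD]
        rw [← sum_ite_mem_univ I (fun i => (L i)⁻¹ * x i)]
        apply Finset.sum_congr rfl
        intro i _
        simp only [v, eI]
        split_ifs <;> ring
      have h2 : ∑ i, v I i * (L i * y i) = ∑ i ∈ I, y i := by
        rw [← sum_ite_mem_univ I y]
        apply Finset.sum_congr rfl
        intro i _
        simp only [v, eI]
        split_ifs with h
        · have hc : (L i)⁻¹ * L i = 1 := inv_mul_cancel₀ (hLne i)
          calc ((L i)⁻¹ * 1) * (L i * y i) = ((L i)⁻¹ * L i) * y i := by ring
            _ = y i := by rw [hc]; ring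
        · ring
      calc (fun i => v I i * D) ⬝ᵥ (Matrix.diagonal L *ᵥ y)
          = D * ∑ i, v I i * (L i * y i) := by
            simp only [dotProduct, Matrix.mulVec_diagonal, Finset.mul_sum]
            apply Finset.sum_congr rfl
            intro i _
            ring
        _ = (∑ i ∈ I, (L i)⁻¹ * x i) * (∑ i ∈ I, y i) := by rw [h1, h2]
  -- per-term rewriting
  have hterm : ∀ I ∈ Psets, p I * ((G I *ᵥ x) ⬝ᵥ (Matrix.diagonal L *ᵥ y))
      = (c I * (∑ i ∈ I, x i * y i)
          - (∑ i ∈ I, (L i)⁻¹ * x i) * (∑ i ∈ I, y i)) / (B * T) := by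
    intro I hI
    rw [hval I hI]
    simp only [p, hS]
    have hcne : c I ≠ 0 := (hcpos I hI).ne'
    field_simp
  rw [Finset.sum_congr rfl hterm]
  rw [← Finset.sum_div, Finset.sum_sub_distrib]
  have e1 : ∑ I ∈ Psets, c I * (∑ i ∈ I, x i * y i)
      = A * (T * ∑ i, x i * y i) + (B - A) * ∑ i, (L i)⁻¹ * (x i * y i) := by
    have := pair_sum hτ (fun i => (L i)⁻¹) (fun i => x i * y i)
    simpa [c, Psets, hA, hB, hT] using this
  have e2 : ∑ I ∈ Psets, (∑ i ∈ I, (L i)⁻¹ * x i) * (∑ i ∈ I, y i)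
      = (B - A) * ∑ i, (L i)⁻¹ * (x i * y i) := by
    have := pair_sum hτ (fun i => (L i)⁻¹ * x i) y
    rw [show ∑ i, ((L i)⁻¹ * x i) * y i = ∑ i, (L i)⁻¹ * (x i * y i) from
      Finset.sum_congr rfl (fun i _ => by ring)] at this
    simp only [Psets, hA, hB] at this ⊢
    rw [this, hy]
    ring
  rw [e1, e2]
  have hxy : x ⬝ᵥ y = ∑ i, x i * y i := rfl
  rw [hxy]
  have hAB : ((n : ℝ) - 1) * A = B * ((τ : ℝ) - 1) := by
    have key := Nat.add_one_mul_choose_eq (n-2) (τ-2)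
    have h1 : n - 2 + 1 = n - 1 := by omega
    have h2 : τ - 2 + 1 = τ - 1 := by omega
    rw [h1, h2] at key
    have := congrArg (fun m : ℕ => (m : ℝ)) key
    push_cast at this
    rw [hA, hB]
    rw [show ((n:ℝ) - 1) = ((n - 1 : ℕ) : ℝ) by push_cast [Nat.cast_sub (by omega : 1 ≤ n)]; ring,
        show ((τ:ℝ) - 1) = ((τ - 1 : ℕ) : ℝ) by push_cast [Nat.cast_sub (by omega : 1 ≤ τ)]; ring]
    exact_mod_cast this
  have hn1 : ((n : ℝ) - 1) ≠ 0 := by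
    have : (2 : ℝ) ≤ (n : ℝ) := by exact_mod_cast hn2
    linarith
  field_simp
  linear_combination (T * (∑ i, x i * y i)) * hAB
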